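/- Suppose positive integers x_1,…,x_n satisfy 1/x_1 + ⋯ + 1/x_n = 1 and a prime p divides at least one of the x_i. Then there exist distinct indices k ≠ l with v_p(x_k) = v_p(x_l) > 0. -/

import Mathlib

theorem stmt_2 (n : ℕ) (x : Fin n → ℕ) (hx : ∀ i, 0 < x i)
    (hsum : ∑ i, (1 : ℚ) / x i = 1) (p : ℕ) (hp : p.Prime)
    (hdvd : ∃ i, p ∣ x i) :
    ∃ k l : Fin n, k ≠ l ∧ padicValNat p (x k) = padicValNat p (x l) ∧
      0 < padicValNat p (x k) := by
  haveI : Fact p.Prime := ⟨hp⟩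
  by_contra hcon
  push_neg at hcon
  obtain ⟨i₀, hi₀⟩ := hdvd
  -- set up valuations
  have hvpos : 0 < padicValNat p (x i₀) :=
    one_le_padicValNat_of_dvd (hx i₀).ne' hi₀
  -- max valuation index
  obtain ⟨i, -, hmax⟩ := Finset.exists_max_image Finset.univ
    (fun j => padicValNat p (x j)) ⟨i₀, Finset.mem_univ i₀⟩
  set m := padicValNat p (x i) with hm
  have hmpos : 0 < m := lt_of_lt_of_le hvpos (hmax i₀ (Finset.mem_univ i₀))
  have hlt : ∀ j : Fin n, j ≠ i → padicValNat p (x j) < m := by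
    intro j hj
    rcases lt_or_eq_of_le (hmax j (Finset.mem_univ j)) with h | h
    · exact h
    · have := hcon j i hj h
      omega
  -- rational valuation of each term
  classical
  set F : ℕ → ℚ := fun k => if hk : k < n then 1 / (x ⟨k, hk⟩ : ℚ) else 1 with hF
  have hFpos : ∀ k, 0 < F k := by
    intro k
    simp only [hF]
    split
    · exact div_pos one_pos (by exact_mod_cast hx _)
    · exact one_pos
  have hFval : ∀ k (hk : k < n), padicValRat p (F k) =
      -(padicValNat p (x ⟨k, hk⟩) : ℤ) := by
    intro k hk
    have hxne : ((x ⟨k, hk⟩ : ℚ)) ≠ 0 := by exact_mod_cast (hx ⟨k, hk⟩).ne'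
    simp only [hF, dif_pos hk, one_div]
    rw [padicValRat.inv, padicValRat.of_nat]
  have hsum' : ∑ k ∈ Finset.range n, F k = 1 := by
    rw [← hsum, Finset.sum_range fun k => F k]
    refine Finset.sum_congr rfl fun j _ => ?_
    simp [hF, j.isLt]
  have hin : (i : ℕ) ∈ Finset.range n := Finset.mem_range.mpr i.isLt
  have hsplit : F i + ∑ k ∈ (Finset.range n).erase i, F k = 1 := by
    rw [Finset.add_sum_erase _ _ hin, hsum']
  have hFi : padicValRat p (F i) = -(m : ℤ) := by
    have := hFval i i.isLt
    simpa using this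
  -- case n = 1 handled inside: erase set nonempty?
  by_cases hne : ((Finset.range n).erase i).Nonempty
  · have hrest : padicValRat p (F i) <
        padicValRat p (∑ k ∈ (Finset.range n).erase i, F k) := by
      refine padicValRat.lt_sum_of_lt hne ?_ hFpos
      intro k hk
      have hkn : k < n := Finset.mem_range.mp (Finset.mem_of_mem_erase hk)
      have hki : (⟨k, hkn⟩ : Fin n) ≠ i := by
        intro h
        exact (Finset.ne_of_mem_erase hk) (by rw [← h])
      rw [hFi, hFval k hkn]
      have := hlt ⟨k, hkn⟩ hki
      omega
    have h0 : padicValRat p (F i + ∑ k ∈ (Finset.range n).erase i, F k) =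
        padicValRat p (F i) := by
      refine padicValRat.add_eq_of_lt ?_ (hFpos _).ne' ?_ hrest
      · rw [hsplit]; norm_num
      · exact (Finset.sum_pos (fun k _ => hFpos k) hne).ne'
    rw [hsplit, hFi] at h0
    simp at h0
    omega
  · -- range n erase i is empty: n = 1, x i = 1
    have : F i = 1 := by
      have := hsplit
      rw [Finset.not_nonempty_iff_eq_empty.mp hne, Finset.sum_empty, add_zero] at this
      exact this
    have hx1 : (x i : ℚ) = 1 := by
      simp only [hF, dif_pos i.isLt, Fin.eta] at this
      have hxne : ((x i : ℚ)) ≠ 0 := by exact_mod_cast (hx i).ne'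
      field_simp at this
      linarith
    have : x i = 1 := by exact_mod_cast hx1
    rw [hm, this] at hmpos
    simp [padicValNat.one] at hmpos
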